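/- Let H be a cocommutative bialgebra over a commutative ring R, F a Drinfel'd twist on H, Δ_F(x) := F · Δ(x) · F⁻¹ the twisted coproduct, and ℛ := F₂₁ · F⁻¹ = Σ_k R^k ⊗ R_k the associated R-matrix. Then (Δ_F ⊗ id)(ℛ) = ℛ₁₃ · ℛ₂₃ in H ⊗ H ⊗ H, where ℛ₁₃ := Σ_k R^k ⊗ 1 ⊗ R_k and ℛ₂₃ := 1 ⊗ ℛ. -/

import Mathlib

open scoped TensorProduct

noncomputable section

/-- `Δ ⊗ id` as an algebra homomorphism `H ⊗ H → (H ⊗ H) ⊗ H`. -/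
def comulTensorId (R H : Type*) [CommRing R] [Ring H] [Bialgebra R H] :
    (H ⊗[R] H) →ₐ[R] (H ⊗[R] H) ⊗[R] H :=
  Algebra.TensorProduct.map (Bialgebra.comulAlgHom R H) (AlgHom.id R H)

/-- `id ⊗ Δ` as an algebra homomorphism `H ⊗ H → H ⊗ (H ⊗ H)`. -/
def idTensorComul (R H : Type*) [CommRing R] [Ring H] [Bialgebra R H] :
    (H ⊗[R] H) →ₐ[R] H ⊗[R] (H ⊗[R] H) :=
  Algebra.TensorProduct.map (AlgHom.id R H) (Bialgebra.comulAlgHom R H)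

/-- `F` is a Drinfel'd twist on the bialgebra `H` with two-sided inverse `Finv`:
it is invertible and satisfies the 2-cocycle condition
`(F ⊗ 1) · (Δ ⊗ id)(F) = (1 ⊗ F) · (id ⊗ Δ)(F)` in `H ⊗ H ⊗ H`. -/
def IsDrinfeldTwist (R : Type*) {H : Type*} [CommRing R] [Ring H] [Bialgebra R H]
    (F Finv : H ⊗[R] H) : Prop :=
  F * Finv = 1 ∧ Finv * F = 1 ∧
    (TensorProduct.assoc R H H H) ((F ⊗ₜ[R] (1 : H)) * comulTensorId R H F) =
      ((1 : H) ⊗ₜ[R] F) * idTensorComul R H F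

/-- The `R`-matrix `ℛ := F₂₁ · F⁻¹` associated to a Drinfel'd twist, where
`F₂₁ = τ(F)` and `τ` is the flip of `H ⊗ H`. -/
def Rmat (R : Type*) {H : Type*} [CommRing R] [Ring H] [Bialgebra R H]
    (F Finv : H ⊗[R] H) : H ⊗[R] H :=
  (Algebra.TensorProduct.comm R H H) F * Finv

/-- The bialgebra `H` is cocommutative: `τ ∘ Δ = Δ`. -/
def IsCocommutative (R : Type*) (H : Type*) [CommRing R] [Ring H] [Bialgebra R H] : Prop :=
  ∀ x : H, (Algebra.TensorProduct.comm R H H) (Coalgebra.comul (R := R) x) =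
    Coalgebra.comul (R := R) x

/-- The twisted coproduct `Δ_F(x) := F · Δ(x) · F⁻¹`, as an `R`-linear map. -/
def comulF (R : Type*) {H : Type*} [CommRing R] [Ring H] [Bialgebra R H]
    (F Finv : H ⊗[R] H) : H →ₗ[R] H ⊗[R] H :=
  (LinearMap.mulLeft R F).comp
    ((LinearMap.mulRight R Finv).comp (Coalgebra.comul (R := R)))

namespace DrinfeldAux3

variable (R : Type*) {H : Type*} [CommRing R] [Ring H] [Bialgebra R H]

/-- Associator as algebra equivalence, abbreviation. -/
def aT : ((H ⊗[R] H) ⊗[R] H) ≃ₐ[R] H ⊗[R] (H ⊗[R] H) :=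
  Algebra.TensorProduct.assoc R R R H H H

def i12 : (H ⊗[R] H) →ₐ[R] H ⊗[R] (H ⊗[R] H) :=
  Algebra.TensorProduct.map (AlgHom.id R H) Algebra.TensorProduct.includeLeft

def i13 : (H ⊗[R] H) →ₐ[R] H ⊗[R] (H ⊗[R] H) :=
  Algebra.TensorProduct.map (AlgHom.id R H) Algebra.TensorProduct.includeRight

def i23 : (H ⊗[R] H) →ₐ[R] H ⊗[R] (H ⊗[R] H) :=
  Algebra.TensorProduct.includeRight

def D1 : (H ⊗[R] H) →ₐ[R] H ⊗[R] (H ⊗[R] H) :=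
  (aT R).toAlgHom.comp (comulTensorId R H)

def s23 : (H ⊗[R] (H ⊗[R] H)) ≃ₐ[R] H ⊗[R] (H ⊗[R] H) :=
  Algebra.TensorProduct.congr AlgEquiv.refl (Algebra.TensorProduct.comm R H H)

def cyc : (H ⊗[R] (H ⊗[R] H)) ≃ₐ[R] H ⊗[R] (H ⊗[R] H) :=
  (Algebra.TensorProduct.comm R H (H ⊗[R] H)).trans (Algebra.TensorProduct.assoc R R R H H H)

def fl : (H ⊗[R] H) ≃ₐ[R] H ⊗[R] H := Algebra.TensorProduct.comm R H H

lemma D1_tmul (x y : H) :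
    D1 R (x ⊗ₜ[R] y) = (aT R) ((Coalgebra.comul (R := R) x) ⊗ₜ[R] y) := by
  simp [D1, comulTensorId, aT]

lemma L0 (w : H ⊗[R] H) : aT R (w ⊗ₜ[R] (1 : H)) = i12 R w := by
  induction w using TensorProduct.induction_on with
  | zero => simp
  | tmul x y => simp [aT, i12]
  | add a b ha hb => rw [TensorProduct.add_tmul, map_add, ha, hb, map_add]

lemma L1 (w : H ⊗[R] H) : s23 R (i12 R w) = i13 R w := by
  induction w using TensorProduct.induction_on with
  | zero => simp
  | tmul x y => simp [s23, i12, i13]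
  | add a b ha hb => simp only [map_add, ha, hb]

lemma L2 (w : H ⊗[R] H) : s23 R (i23 R w) = i23 R (fl R w) := by
  induction w using TensorProduct.induction_on with
  | zero => simp
  | tmul x y => simp [s23, i23, fl]
  | add a b ha hb => simp only [map_add, ha, hb]

lemma L3 (hcc : IsCocommutative R H) (w : H ⊗[R] H) :
    s23 R (idTensorComul R H w) = idTensorComul R H w := by
  induction w using TensorProduct.induction_on with
  | zero => simp
  | tmul x y =>
    have := hcc y
    simp only [idTensorComul, Algebra.TensorProduct.map_tmul, AlgHom.coe_id, id_eq,
      Bialgebra.comulAlgHom_apply, s23, Algebra.TensorProduct.congr_apply,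
      AlgEquiv.coe_refl, AlgEquiv.refl_toAlgHom, AlgHom.coe_coe]
    exact congrArg (x ⊗ₜ[R] ·) this
  | add a b ha hb => simp only [map_add, ha, hb]

lemma L4 (w : H ⊗[R] H) : cyc R (i12 R w) = i13 R (fl R w) := by
  induction w using TensorProduct.induction_on with
  | zero => simp
  | tmul x y => simp [cyc, i12, i13, fl]
  | add a b ha hb => simp only [map_add, ha, hb]

lemma L5 (w : H ⊗[R] H) : cyc R (i23 R w) = i12 R w := by
  induction w using TensorProduct.induction_on with
  | zero => simp
  | tmul x y => simp [cyc, i23, i12]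
  | add a b ha hb => simp only [map_add, ha, hb]

lemma L6 (w : H ⊗[R] H) : cyc R (idTensorComul R H w) = D1 R (fl R w) := by
  induction w using TensorProduct.induction_on with
  | zero => simp
  | tmul x y =>
    simp [cyc, idTensorComul, fl, D1_tmul, Algebra.TensorProduct.comm_tmul, aT]
  | add a b ha hb => simp only [map_add, ha, hb]

lemma L7aux (u : H ⊗[R] H) (y : H) :
    cyc R (aT R (u ⊗ₜ[R] y)) = s23 R (aT R ((fl R u) ⊗ₜ[R] y)) := by
  induction u using TensorProduct.induction_on with
  | zero => simp
  | tmul a b => simp [cyc, aT, fl, s23]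
  | add a b ha hb =>
    rw [map_add, TensorProduct.add_tmul, map_add, map_add, TensorProduct.add_tmul,
      map_add, map_add, ha, hb]

lemma L7 (hcc : IsCocommutative R H) (w : H ⊗[R] H) :
    cyc R (D1 R w) = s23 R (D1 R w) := by
  induction w using TensorProduct.induction_on with
  | zero => simp
  | tmul x y =>
    rw [D1_tmul, L7aux]
    have h : (fl R) (Coalgebra.comul (R := R) x) = Coalgebra.comul (R := R) x := hcc x
    rw [h]
  | add a b ha hb => simp only [map_add, ha, hb]

theorem monoid_swap {M : Type*} [Monoid M] {a b c d a' b' c' d' : M}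
    (h : a * b = c * d) (ha : a' * a = 1) (hb' : b' * b = 1)
    (hc : c * c' = 1) (hd : d * d' = 1) : b' * a' = d' * c' := by
  have e1 : c * d * (d' * c') = 1 := by
    rw [mul_assoc c d, ← mul_assoc d d', hd, one_mul, hc]
  calc b' * a' = b' * a' * (c * d * (d' * c')) := by rw [e1, mul_one]
    _ = b' * (a' * (a * (b * (d' * c')))) := by rw [← h]; simp only [mul_assoc]
    _ = d' * c' := by rw [← mul_assoc a' a, ha, one_mul, ← mul_assoc b' b, hb', one_mul]

end DrinfeldAux3


set_option maxHeartbeats 1000000 in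
/-- For a Drinfel'd twist `F` on a cocommutative bialgebra `H`, the
`R`-matrix `ℛ = F₂₁ · F⁻¹` satisfies `(Δ_F ⊗ id)(ℛ) = ℛ₁₃ · ℛ₂₃` in `H ⊗ H ⊗ H`. -/
theorem Rmatrix_comulF_tensor_id
    (R : Type*) [CommRing R] (H : Type*) [Ring H] [Bialgebra R H]
    (hcc : IsCocommutative R H)
    (F Finv : H ⊗[R] H) (hF : IsDrinfeldTwist R F Finv) :
    (TensorProduct.assoc R H H H)
        ((TensorProduct.map (comulF R F Finv) LinearMap.id) (Rmat R F Finv)) =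
      ((Algebra.TensorProduct.map (AlgHom.id R H) Algebra.TensorProduct.includeRight)
          (Rmat R F Finv)) *
        ((1 : H) ⊗ₜ[R] Rmat R F Finv) := by
  obtain ⟨hFG, hGF, hcoc0⟩ := hF
  open DrinfeldAux3 in
  have hassoc : ∀ z : (H ⊗[R] H) ⊗[R] H,
      (TensorProduct.assoc R H H H) z = DrinfeldAux3.aT R z := fun z => rfl
  open DrinfeldAux3 in
  have hD1def : ∀ w : H ⊗[R] H, aT R (comulTensorId R H w) = D1 R w := fun _ => rfl
  open DrinfeldAux3 in
  have hcoc : i12 R F * D1 R F = i23 R F * idTensorComul R H F := by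
    have h := hcoc0
    rw [hassoc, map_mul, L0, hD1def] at h
    rw [h]
    rfl
  open DrinfeldAux3 in
  have LmapF : ∀ w : H ⊗[R] H,
      (TensorProduct.map (comulF R F Finv) LinearMap.id) w
        = (F ⊗ₜ[R] (1:H)) * (comulTensorId R H w) * (Finv ⊗ₜ[R] (1:H)) := by
    intro w
    induction w using TensorProduct.induction_on with
    | zero => simp
    | tmul x y =>
      simp [comulF, comulTensorId, Algebra.TensorProduct.tmul_mul_tmul, mul_assoc]
    | add a b ha hb =>
      rw [map_add, map_add, ha, hb, mul_add, add_mul]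
  open DrinfeldAux3 in
  have hc23 : i13 R F * s23 R (D1 R F) = i23 R (fl R F) * idTensorComul R H F := by
    have h := congrArg (s23 R) hcoc
    rw [map_mul, map_mul, L1, L2, L3 R hcc] at h
    exact h
  open DrinfeldAux3 in
  have hcycle : i13 R (fl R F) * s23 R (D1 R F) = i12 R F * D1 R (fl R F) := by
    have h := congrArg (cyc R) hcoc
    rw [map_mul, map_mul, L4, L5, L6, L7 R hcc] at h
    exact h
  open DrinfeldAux3 in
  have hX : s23 R (D1 R F) = i13 R Finv * (i23 R (fl R F) * idTensorComul R H F) := by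
    have h1 : i13 R Finv * i13 R F = 1 := by rw [← map_mul, hGF, map_one]
    calc s23 R (D1 R F) = (i13 R Finv * i13 R F) * s23 R (D1 R F) := by rw [h1, one_mul]
      _ = i13 R Finv * (i13 R F * s23 R (D1 R F)) := by rw [mul_assoc]
      _ = _ := by rw [hc23]
  open DrinfeldAux3 in
  have hhead : i12 R F * D1 R (fl R F)
      = i13 R (fl R F) * (i13 R Finv * (i23 R (fl R F) * idTensorComul R H F)) := by
    rw [← hcycle, hX]
  open DrinfeldAux3 in
  have htail : D1 R Finv * i12 R Finv = idTensorComul R H Finv * i23 R Finv :=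
    monoid_swap hcoc (by rw [← map_mul, hGF, map_one]) (by rw [← map_mul, hGF, map_one])
      (by rw [← map_mul, hFG, map_one]) (by rw [← map_mul, hFG, map_one])
  open DrinfeldAux3 in
  have hd2 : idTensorComul R H F * idTensorComul R H Finv = 1 := by
    rw [← map_mul, hFG, map_one]
  open DrinfeldAux3 in
  have hR : Rmat R F Finv = fl R F * Finv := rfl
  open DrinfeldAux3 in
  calc (TensorProduct.assoc R H H H)
        ((TensorProduct.map (comulF R F Finv) LinearMap.id) (Rmat R F Finv))
      = i12 R F * D1 R (Rmat R F Finv) * i12 R Finv := by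
        rw [LmapF, hassoc, map_mul, map_mul, L0, L0, hD1def]
    _ = (i12 R F * D1 R (fl R F)) * (D1 R Finv * i12 R Finv) := by
        rw [hR, map_mul]; simp only [mul_assoc]
    _ = (i13 R (fl R F) * (i13 R Finv * (i23 R (fl R F) * idTensorComul R H F)))
          * (idTensorComul R H Finv * i23 R Finv) := by rw [hhead, htail]
    _ = i13 R (fl R F) * (i13 R Finv * (i23 R (fl R F)
          * ((idTensorComul R H F * idTensorComul R H Finv) * i23 R Finv))) := by
        simp only [mul_assoc]
    _ = (i13 R (fl R F) * i13 R Finv) * (i23 R (fl R F) * i23 R Finv) := by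
        rw [hd2, one_mul]; simp only [mul_assoc]
    _ = i13 R (Rmat R F Finv) * i23 R (Rmat R F Finv) := by rw [hR, map_mul, map_mul]
    _ = _ := by
        rw [show i23 R (Rmat R F Finv) = (1:H) ⊗ₜ[R] (Rmat R F Finv) from
          Algebra.TensorProduct.includeRight_apply _]
        rfl
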